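/- Let ρ be a positive definite matrix in M_n(ℂ) and ω ∈ ℝ. The linear operator [ρ]_ω(A) = ∫₀¹ e^{ω(1/2−s)} ρ^s A ρ^{1−s} ds on M_n(ℂ) is invertible, with inverse given by [ρ]_ω^{−1}(A) = ∫₀^∞ (tI + e^{−ω/2}ρ)^{−1} A (tI + e^{ω/2}ρ)^{−1} dt. -/

import Mathlib

open Matrix
open scoped ComplexOrder

attribute [local instance] Matrix.normedAddCommGroup Matrix.normedSpace

open MeasureTheory Set Filter Topology

noncomputable instance mulRhoAux_enorm {n : ℕ} : ENormedAddCommMonoid (Matrix (Fin n) (Fin n) ℂ) :=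
  NormedAddCommGroup.toENormedAddCommMonoid

/-- The real power `ρ^s` of a positive definite matrix, via the functional calculus. -/
noncomputable def mpow {n : ℕ} {ρ : Matrix (Fin n) (Fin n) ℂ} (hρ : ρ.PosDef) (s : ℝ) :
    Matrix (Fin n) (Fin n) ℂ :=
  hρ.1.cfc fun x => x ^ s

namespace mulRhoAux

lemma hasDeriv_case_ne {a b : ℝ} (ha : 0 < a) (hb : 0 < b) (t : ℝ) (ht' : (0:ℝ) ≤ t) :
    HasDerivAt (fun t => (a-b)⁻¹ * (Real.log (t+b) - Real.log (t+a)))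
      (((t+a)*(t+b))⁻¹ * (a - b) * (a-b)⁻¹) t := by
  have h1 : HasDerivAt (fun t : ℝ => t + b) 1 t := (hasDerivAt_id t).add_const b
  have h2 : HasDerivAt (fun t : ℝ => t + a) 1 t := (hasDerivAt_id t).add_const a
  have hb' : t + b ≠ 0 := by positivity
  have ha' : t + a ≠ 0 := by positivity
  have := ((h1.log hb').sub (h2.log ha')).const_mul (a-b)⁻¹
  refine this.congr_deriv ?_
  field_simp
  ring

lemma tendsto_log_ratio {a b : ℝ} (ha : 0 < a) (hb : 0 < b) :
    Tendsto (fun t => (a-b)⁻¹ * (Real.log (t+b) - Real.log (t+a))) atTop (𝓝 0) := by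
  have h0 : Tendsto (fun t : ℝ => (t+b)/(t+a)) atTop (𝓝 1) := by
    have h1 : Tendsto (fun t : ℝ => (b-a)/(t+a)) atTop (𝓝 0) :=
      Tendsto.div_atTop tendsto_const_nhds (tendsto_atTop_add_const_right _ a tendsto_id)
    have := h1.const_add 1
    rw [add_zero] at this
    apply this.congr'
    filter_upwards [Filter.eventually_gt_atTop 0] with t ht
    have : t + a ≠ 0 := by positivity
    field_simp
    ring
  have h2 : Tendsto (fun t : ℝ => Real.log ((t+b)/(t+a))) atTop (𝓝 0) := by
    have := (Real.continuousAt_log one_ne_zero).tendsto.comp h0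
    simpa [Function.comp_def] using this
  have h3 : Tendsto (fun t : ℝ => Real.log (t+b) - Real.log (t+a)) atTop (𝓝 0) := by
    apply h2.congr'
    filter_upwards [Filter.eventually_gt_atTop 0] with t ht
    rw [Real.log_div (by positivity) (by positivity)]
  simpa using h3.const_mul (a-b)⁻¹

lemma int2_ne {a b : ℝ} (ha : 0 < a) (hb : 0 < b) (hab : a ≠ b) :
    IntegrableOn (fun t => ((t+a)*(t+b))⁻¹) (Ioi (0:ℝ)) ∧
    ∫ t in Ioi (0:ℝ), ((t+a)*(t+b))⁻¹ = (Real.log a - Real.log b) / (a - b) := by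
  have hab' : a - b ≠ 0 := sub_ne_zero.mpr hab
  have hderiv : ∀ t ∈ Ici (0:ℝ), HasDerivAt
      (fun t => (a-b)⁻¹ * (Real.log (t+b) - Real.log (t+a))) (((t+a)*(t+b))⁻¹) t := by
    intro t ht
    have ht' : (0:ℝ) ≤ t := ht
    have := hasDeriv_case_ne ha hb t ht'
    convert this using 1
    rw [mul_assoc, mul_inv_cancel₀ hab', mul_one]
  have hpos : ∀ t ∈ Ioi (0:ℝ), 0 ≤ ((t+a)*(t+b))⁻¹ := by
    intro t ht
    have : (0:ℝ) < t := ht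
    positivity
  have htend := tendsto_log_ratio ha hb
  refine ⟨integrableOn_Ioi_deriv_of_nonneg' hderiv hpos htend, ?_⟩
  rw [integral_Ioi_of_hasDerivAt_of_nonneg' hderiv hpos htend]
  rw [zero_add, zero_add, zero_sub]
  rw [show -((a-b)⁻¹*(Real.log b - Real.log a)) = (a-b)⁻¹ * (Real.log a - Real.log b) from by
    ring, inv_mul_eq_div]

lemma int2_eq {a : ℝ} (ha : 0 < a) :
    IntegrableOn (fun t => ((t+a)*(t+a))⁻¹) (Ioi (0:ℝ)) ∧
    ∫ t in Ioi (0:ℝ), ((t+a)*(t+a))⁻¹ = a⁻¹ := by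
  have hderiv : ∀ t ∈ Ici (0:ℝ), HasDerivAt (fun t => -(t+a)⁻¹) (((t+a)*(t+a))⁻¹) t := by
    intro t ht
    have ht' : (0:ℝ) ≤ t := ht
    have ha' : t + a ≠ 0 := by positivity
    have h1 : HasDerivAt (fun t : ℝ => t + a) 1 t := (hasDerivAt_id t).add_const a
    have := (h1.inv ha').neg
    refine this.congr_deriv ?_
    rw [mul_inv]
    field_simp
  have hpos : ∀ t ∈ Ioi (0:ℝ), 0 ≤ ((t+a)*(t+a))⁻¹ := by
    intro t ht
    have : (0:ℝ) < t := ht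
    positivity
  have htend : Tendsto (fun t : ℝ => -(t+a)⁻¹) atTop (𝓝 0) := by
    have : Tendsto (fun t : ℝ => (t+a)⁻¹) atTop (𝓝 0) :=
      Tendsto.inv_tendsto_atTop (tendsto_atTop_add_const_right _ a tendsto_id)
    simpa using this.neg
  refine ⟨integrableOn_Ioi_deriv_of_nonneg' hderiv hpos htend, ?_⟩
  rw [integral_Ioi_of_hasDerivAt_of_nonneg' hderiv hpos htend]
  simp

lemma int1 {a b : ℝ} (ha : 0 < a) (hb : 0 < b) :
    ∫ s in (0:ℝ)..1, a ^ s * b ^ (1-s) =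
      if a = b then a else (a - b) / (Real.log a - Real.log b) := by
  have key : ∀ s : ℝ, a ^ s * b ^ (1-s) = b * Real.exp (s * (Real.log a - Real.log b)) := by
    intro s
    have h : b * Real.exp (s*(Real.log a - Real.log b)) =
        Real.exp (Real.log b + s*(Real.log a - Real.log b)) := by
      rw [Real.exp_add, Real.exp_log hb]
    rw [h, Real.rpow_def_of_pos ha, Real.rpow_def_of_pos hb, ← Real.exp_add]
    congr 1
    ring
  simp_rw [key]
  by_cases hab : a = b
  · subst hab
    simp
  · have hlog : Real.log a - Real.log b ≠ 0 := by
      intro h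
      exact hab (Real.log_injOn_pos (mem_Ioi.mpr ha) (mem_Ioi.mpr hb) (by linarith))
    rw [if_neg hab]
    rw [intervalIntegral.integral_const_mul]
    have h2 : ∫ s in (0:ℝ)..1, Real.exp (s * (Real.log a - Real.log b)) =
        (Real.log a - Real.log b)⁻¹ * (Real.exp (Real.log a - Real.log b) - 1) := by
      rw [intervalIntegral.integral_comp_mul_right (fun x => Real.exp x) hlog]
      simp [integral_exp]
    rw [h2, Real.exp_sub, Real.exp_log ha, Real.exp_log hb]
    field_simp


lemma conj_sum {n : ℕ} (U B : Matrix (Fin n) (Fin n) ℂ) : U * B * star U =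
    ∑ k, ∑ l, B k l • (U * Matrix.single k l 1 * star U) := by
  conv_lhs => rw [matrix_eq_sum_single B]
  have h : ∀ (i j : Fin n), Matrix.single i j (B i j) = B i j • Matrix.single i j (1:ℂ) := by
    intro i j
    rw [smul_single, smul_eq_mul, mul_one]
  simp_rw [Finset.mul_sum, Finset.sum_mul, h, Matrix.mul_smul, Matrix.smul_mul]

lemma cont_rpow {a : ℝ} (ha : 0 < a) : Continuous fun s : ℝ => a ^ s := by
  have h : (fun s : ℝ => a ^ s) = fun s => Real.exp (Real.log a * s) :=
    funext fun s => Real.rpow_def_of_pos ha s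
  rw [h]
  fun_prop

lemma exp_factor (ω s x y : ℝ) (hx : 0 < x) (hy : 0 < y) :
    Real.exp (ω * (1/2 - s)) * (x ^ s * y ^ (1-s)) =
      (Real.exp (-ω/2) * x) ^ s * (Real.exp (ω/2) * y) ^ (1-s) := by
  rw [Real.mul_rpow (Real.exp_pos _).le hx.le, Real.mul_rpow (Real.exp_pos _).le hy.le,
    ← Real.exp_mul, ← Real.exp_mul,
    show ω * (1/2 - s) = -ω/2*s + ω/2*(1-s) by ring, Real.exp_add]
  ring

end mulRhoAux

/-- The non-commutative multiplication operator
`[ρ]_ω(A) = ∫₀¹ e^{ω(1/2−s)} ρ^s A ρ^{1−s} ds`. -/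
noncomputable def mulRho {n : ℕ} {ρ : Matrix (Fin n) (Fin n) ℂ} (hρ : ρ.PosDef)
    (ω : ℝ) (A : Matrix (Fin n) (Fin n) ℂ) : Matrix (Fin n) (Fin n) ℂ :=
  ∫ s in (0:ℝ)..1, (Real.exp (ω * (1 / 2 - s)) : ℂ) • (mpow hρ s * A * mpow hρ (1 - s))

namespace mulRhoAux

lemma mpow_eq {n : ℕ} {ρ : Matrix (Fin n) (Fin n) ℂ} (hρ : ρ.PosDef) (r : ℝ) :
    mpow hρ r = (hρ.1.eigenvectorUnitary : Matrix (Fin n) (Fin n) ℂ) *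
    diagonal (fun i => ((hρ.1.eigenvalues i ^ r : ℝ) : ℂ)) *
    star (hρ.1.eigenvectorUnitary : Matrix (Fin n) (Fin n) ℂ) := rfl

set_option maxHeartbeats 1000000 in
lemma mulRho_repr {n : ℕ} {ρ : Matrix (Fin n) (Fin n) ℂ} (hρ : ρ.PosDef) (ω : ℝ)
    (A : Matrix (Fin n) (Fin n) ℂ) :
    mulRho hρ ω A = ∑ k, ∑ l,
      ((∫ s in (0:ℝ)..1, (Real.exp (-ω/2) * hρ.1.eigenvalues k) ^ s *
          (Real.exp (ω/2) * hρ.1.eigenvalues l) ^ (1-s) : ℝ) : ℂ) •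
        (((star (hρ.1.eigenvectorUnitary : Matrix (Fin n) (Fin n) ℂ)) * A *
            (hρ.1.eigenvectorUnitary : Matrix (Fin n) (Fin n) ℂ)) k l •
          ((hρ.1.eigenvectorUnitary : Matrix (Fin n) (Fin n) ℂ) * Matrix.single k l 1 *
            star (hρ.1.eigenvectorUnitary : Matrix (Fin n) (Fin n) ℂ))) := by
  set U := (hρ.1.eigenvectorUnitary : Matrix (Fin n) (Fin n) ℂ) with hU
  set lam := hρ.1.eigenvalues with hlamdef
  have hlam : ∀ i, 0 < lam i := hρ.eigenvalues_pos
  have hrepr : ∀ s : ℝ,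
      (Real.exp (ω * (1 / 2 - s)) : ℂ) • (mpow hρ s * A * mpow hρ (1 - s)) =
      ∑ k, ∑ l, (((Real.exp (-ω/2) * lam k) ^ s * (Real.exp (ω/2) * lam l) ^ (1-s) : ℝ) : ℂ) •
        ((star U * A * U) k l • (U * Matrix.single k l 1 * star U)) := by
    intro s
    have hm : ∀ r : ℝ, mpow hρ r = U * diagonal (fun i => ((lam i ^ r : ℝ) : ℂ)) * star U :=
      fun r => mpow_eq hρ r
    have key : ∀ (D1 D2 : Matrix (Fin n) (Fin n) ℂ),
        (U * D1 * star U) * A * (U * D2 * star U) = U * (D1 * (star U * A * U) * D2) * star U := by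
      intro D1 D2
      simp only [Matrix.mul_assoc]
    rw [hm s, hm (1-s), key, conj_sum U _, Finset.smul_sum]
    refine Finset.sum_congr rfl fun k _ => ?_
    rw [Finset.smul_sum]
    refine Finset.sum_congr rfl fun l _ => ?_
    rw [smul_smul, smul_smul]
    congr 1
    rw [Matrix.mul_diagonal, Matrix.diagonal_mul]
    rw [show ((Real.exp (-ω/2) * lam k) ^ s * (Real.exp (ω/2) * lam l) ^ (1-s) : ℝ) =
      Real.exp (ω * (1/2 - s)) * (lam k ^ s * lam l ^ (1-s)) from
      (exp_factor ω s (lam k) (lam l) (hlam k) (hlam l)).symm]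
    push_cast
    ring
  rw [mulRho]
  simp_rw [hrepr]
  have hc : ∀ (k l : Fin n), Continuous (fun s : ℝ =>
      (((Real.exp (-ω/2) * lam k) ^ s * (Real.exp (ω/2) * lam l) ^ (1-s) : ℝ) : ℂ) •
        ((star U * A * U) k l • (U * Matrix.single k l 1 * star U))) := by
    intro k l
    apply Continuous.fun_smul _ continuous_const
    apply Complex.continuous_ofReal.comp
    exact ((cont_rpow (mul_pos (Real.exp_pos _) (hlam k))).mul
      ((cont_rpow (mul_pos (Real.exp_pos _) (hlam l))).comp
        (continuous_const.sub continuous_id)))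
  have hint : ∀ (k l : Fin n), IntervalIntegrable (fun s : ℝ =>
      (((Real.exp (-ω/2) * lam k) ^ s * (Real.exp (ω/2) * lam l) ^ (1-s) : ℝ) : ℂ) •
        ((star U * A * U) k l • (U * Matrix.single k l 1 * star U)))
      volume 0 1 := fun k l => (hc k l).intervalIntegrable _ _
  have h1 := intervalIntegral.integral_finset_sum (μ := volume) (a := (0:ℝ)) (b := 1)
    (s := Finset.univ) (f := fun (k : Fin n) (s : ℝ) =>
      ∑ l, (((Real.exp (-ω/2) * lam k) ^ s * (Real.exp (ω/2) * lam l) ^ (1-s) : ℝ) : ℂ) •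
        ((star U * A * U) k l • (U * Matrix.single k l 1 * star U)))
    (fun k _ => (continuous_finset_sum Finset.univ fun l _ => hc k l).intervalIntegrable _ _)
  rw [h1]
  refine Finset.sum_congr rfl fun k _ => ?_
  have h2 := intervalIntegral.integral_finset_sum (μ := volume) (a := (0:ℝ)) (b := 1)
    (s := Finset.univ) (f := fun (l : Fin n) (s : ℝ) =>
      (((Real.exp (-ω/2) * lam k) ^ s * (Real.exp (ω/2) * lam l) ^ (1-s) : ℝ) : ℂ) •
        ((star U * A * U) k l • (U * Matrix.single k l 1 * star U)))
    (fun l _ => hint k l)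
  rw [h2]
  refine Finset.sum_congr rfl fun l _ => ?_
  rw [intervalIntegral.integral_smul_const, intervalIntegral.integral_ofReal]


lemma scalar_key {a b : ℝ} (ha : 0 < a) (hb : 0 < b) :
    IntegrableOn (fun t => ((t+a)*(t+b))⁻¹) (Ioi (0:ℝ)) ∧
    (∫ t in Ioi (0:ℝ), ((t+a)*(t+b))⁻¹) * (∫ s in (0:ℝ)..1, a ^ s * b ^ (1-s)) = 1 := by
  rw [int1 ha hb]
  by_cases hab : a = b
  · subst hab
    obtain ⟨h1, h2⟩ := int2_eq ha
    rw [if_pos rfl, h2]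
    exact ⟨h1, inv_mul_cancel₀ ha.ne'⟩
  · obtain ⟨h1, h2⟩ := int2_ne ha hb hab
    rw [if_neg hab, h2]
    have hab' : a - b ≠ 0 := sub_ne_zero.mpr hab
    have hlog : Real.log a - Real.log b ≠ 0 := by
      intro h
      exact hab (Real.log_injOn_pos (mem_Ioi.mpr ha) (mem_Ioi.mpr hb) (by linarith))
    refine ⟨h1, ?_⟩
    rw [div_mul_div_comm, mul_comm (a-b), div_self (mul_ne_zero hlog hab')]

lemma inv_shift {n : ℕ} {ρ : Matrix (Fin n) (Fin n) ℂ} (hρ : ρ.PosDef) {t c : ℝ}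
    (ht : 0 < t) (hc : 0 < c) :
    ((t:ℂ) • (1 : Matrix (Fin n) (Fin n) ℂ) + (c:ℂ) • ρ)⁻¹ =
      (hρ.1.eigenvectorUnitary : Matrix (Fin n) (Fin n) ℂ) *
        diagonal (fun k => (((t + c * hρ.1.eigenvalues k : ℝ) : ℂ))⁻¹) *
        star (hρ.1.eigenvectorUnitary : Matrix (Fin n) (Fin n) ℂ) := by
  set U := (hρ.1.eigenvectorUnitary : Matrix (Fin n) (Fin n) ℂ) with hU
  set lam := hρ.1.eigenvalues with hlamdef
  have hlam : ∀ i, 0 < lam i := hρ.eigenvalues_pos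
  have hU1 : U * star U = 1 := Matrix.mem_unitaryGroup_iff.mp (hρ.1.eigenvectorUnitary).2
  have hU2 : star U * U = 1 := Matrix.mem_unitaryGroup_iff'.mp (hρ.1.eigenvectorUnitary).2
  have h1 : (t:ℂ) • (1 : Matrix (Fin n) (Fin n) ℂ) =
      U * diagonal (fun _ : Fin n => (t:ℂ)) * star U := by
    rw [← smul_one_eq_diagonal, Matrix.mul_smul, Matrix.mul_one, Matrix.smul_mul, hU1]
  have hfun : (fun k : Fin n => ((c * lam k : ℝ) : ℂ)) =
      (c:ℂ) • ((RCLike.ofReal : ℝ → ℂ) ∘ lam) := by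
    funext k
    push_cast
    rfl
  have h2 : (c:ℂ) • ρ = U * diagonal (fun k => ((c * lam k : ℝ) : ℂ)) * star U := by
    conv_lhs => rw [hρ.1.spectral_theorem, Unitary.conjStarAlgAut_apply]
    rw [hfun, Matrix.diagonal_smul, Matrix.mul_smul, Matrix.smul_mul]
  have hM : (t:ℂ) • (1 : Matrix (Fin n) (Fin n) ℂ) + (c:ℂ) • ρ =
      U * diagonal (fun k => ((t + c * lam k : ℝ) : ℂ)) * star U := by
    rw [h1, h2, ← Matrix.add_mul, ← Matrix.mul_add, diagonal_add]
    congr 2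
    funext k
    push_cast
    ring
  rw [hM]
  apply Matrix.inv_eq_right_inv
  have key : (U * diagonal (fun k => ((t + c * lam k : ℝ) : ℂ)) * star U) *
      (U * diagonal (fun k => (((t + c * lam k : ℝ) : ℂ))⁻¹) * star U) =
      U * (diagonal (fun k => ((t + c * lam k : ℝ) : ℂ)) * (star U * U) *
        diagonal (fun k => (((t + c * lam k : ℝ) : ℂ))⁻¹)) * star U := by
    simp only [Matrix.mul_assoc]
  rw [key, hU2, Matrix.mul_one, diagonal_mul_diagonal,
    show (fun k => ((t + c * lam k : ℝ) : ℂ) * (((t + c * lam k : ℝ) : ℂ))⁻¹) =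
      fun _ : Fin n => (1:ℂ) from funext fun k => mul_inv_cancel₀
        (Complex.ofReal_ne_zero.mpr (add_pos ht (mul_pos hc (hlam k))).ne'),
    diagonal_one, Matrix.mul_one, hU1]

end mulRhoAux

/-- The candidate inverse
`[ρ]_ω⁻¹(A) = ∫₀^∞ (tI + e^{−ω/2}ρ)⁻¹ A (tI + e^{ω/2}ρ)⁻¹ dt`. -/
noncomputable def divRho {n : ℕ} (ρ : Matrix (Fin n) (Fin n) ℂ)
    (ω : ℝ) (A : Matrix (Fin n) (Fin n) ℂ) : Matrix (Fin n) (Fin n) ℂ :=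
  ∫ t in Set.Ioi (0:ℝ),
    ((t : ℂ) • (1 : Matrix (Fin n) (Fin n) ℂ) + (Real.exp (-ω / 2) : ℂ) • ρ)⁻¹ * A *
      ((t : ℂ) • (1 : Matrix (Fin n) (Fin n) ℂ) + (Real.exp (ω / 2) : ℂ) • ρ)⁻¹

namespace mulRhoAux

lemma divRho_repr {n : ℕ} {ρ : Matrix (Fin n) (Fin n) ℂ} (hρ : ρ.PosDef) (ω : ℝ)
    (A : Matrix (Fin n) (Fin n) ℂ) :
    divRho ρ ω A = ∑ k, ∑ l,
      ((∫ t in Ioi (0:ℝ), ((t + Real.exp (-ω/2) * hρ.1.eigenvalues k) *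
          (t + Real.exp (ω/2) * hρ.1.eigenvalues l))⁻¹ : ℝ) : ℂ) •
        (((star (hρ.1.eigenvectorUnitary : Matrix (Fin n) (Fin n) ℂ)) * A *
            (hρ.1.eigenvectorUnitary : Matrix (Fin n) (Fin n) ℂ)) k l •
          ((hρ.1.eigenvectorUnitary : Matrix (Fin n) (Fin n) ℂ) * Matrix.single k l 1 *
            star (hρ.1.eigenvectorUnitary : Matrix (Fin n) (Fin n) ℂ))) := by
  set U := (hρ.1.eigenvectorUnitary : Matrix (Fin n) (Fin n) ℂ) with hU
  set lam := hρ.1.eigenvalues with hlamdef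
  have hlam : ∀ i, 0 < lam i := hρ.eigenvalues_pos
  have hpt : ∀ t ∈ Ioi (0:ℝ),
      ((t : ℂ) • (1 : Matrix (Fin n) (Fin n) ℂ) + (Real.exp (-ω / 2) : ℂ) • ρ)⁻¹ * A *
        ((t : ℂ) • (1 : Matrix (Fin n) (Fin n) ℂ) + (Real.exp (ω / 2) : ℂ) • ρ)⁻¹ =
      ∑ k, ∑ l, ((((t + Real.exp (-ω/2) * lam k) * (t + Real.exp (ω/2) * lam l))⁻¹ : ℝ) : ℂ) •
        ((star U * A * U) k l • (U * Matrix.single k l 1 * star U)) := by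
    intro t ht
    have ht' : (0:ℝ) < t := ht
    rw [inv_shift hρ ht' (Real.exp_pos (-ω/2)), inv_shift hρ ht' (Real.exp_pos (ω/2))]
    have key : ∀ (D1 D2 : Matrix (Fin n) (Fin n) ℂ),
        (U * D1 * star U) * A * (U * D2 * star U) = U * (D1 * (star U * A * U) * D2) * star U := by
      intro D1 D2
      simp only [Matrix.mul_assoc]
    rw [key, conj_sum U _]
    refine Finset.sum_congr rfl fun k _ => ?_
    refine Finset.sum_congr rfl fun l _ => ?_
    rw [smul_smul]
    congr 1
    rw [Matrix.mul_diagonal, Matrix.diagonal_mul]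
    have h1 : (0:ℝ) < t + Real.exp (-ω/2) * lam k :=
      add_pos ht' (mul_pos (Real.exp_pos _) (hlam k))
    have h2 : (0:ℝ) < t + Real.exp (ω/2) * lam l :=
      add_pos ht' (mul_pos (Real.exp_pos _) (hlam l))
    rw [mul_inv]
    push_cast
    ring
  have hg : ∀ (k l : Fin n), IntegrableOn
      (fun t => ((t + Real.exp (-ω/2) * lam k) * (t + Real.exp (ω/2) * lam l))⁻¹)
      (Ioi (0:ℝ)) :=
    fun k l => (scalar_key (mul_pos (Real.exp_pos _) (hlam k))
      (mul_pos (Real.exp_pos _) (hlam l))).1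
  have hint : ∀ (k l : Fin n), Integrable (fun t : ℝ =>
      ((((t + Real.exp (-ω/2) * lam k) * (t + Real.exp (ω/2) * lam l))⁻¹ : ℝ) : ℂ) •
        ((star U * A * U) k l • (U * Matrix.single k l 1 * star U)))
      (volume.restrict (Ioi (0:ℝ))) :=
    fun k l => ((hg k l).ofReal).smul_const _
  rw [divRho, setIntegral_congr_fun measurableSet_Ioi hpt]
  rw [integral_finset_sum _ (fun k _ => integrable_finset_sum _ (fun l _ => hint k l))]
  refine Finset.sum_congr rfl fun k _ => ?_
  rw [integral_finset_sum _ (fun l _ => hint k l)]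
  refine Finset.sum_congr rfl fun l _ => ?_
  rw [integral_smul_const]
  congr 1
  exact integral_ofReal


lemma sum_form {n : ℕ} (U : Matrix (Fin n) (Fin n) ℂ) (c : Fin n → Fin n → ℂ) :
    ∑ k, ∑ l, c k l • (U * Matrix.single k l 1 * star U) = U * Matrix.of c * star U :=
  (conj_sum U (Matrix.of c)).symm

lemma star_conj {n : ℕ} (U : Matrix (Fin n) (Fin n) ℂ) (hU2 : star U * U = 1)
    (M : Matrix (Fin n) (Fin n) ℂ) : star U * (U * M * star U) * U = M := by
  rw [show star U * (U * M * star U) * U = (star U * U) * M * (star U * U) from by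
    simp only [Matrix.mul_assoc], hU2, Matrix.one_mul, Matrix.mul_one]

end mulRhoAux

open mulRhoAux in
/-- `[ρ]_ω` is invertible on `M_n(ℂ)`, with inverse given by
`A ↦ ∫₀^∞ (tI + e^{−ω/2}ρ)⁻¹ A (tI + e^{ω/2}ρ)⁻¹ dt`. -/
theorem mulRho_invertible {n : ℕ} (ρ : Matrix (Fin n) (Fin n) ℂ) (hρ : ρ.PosDef)
    (ω : ℝ) :
    Function.Bijective (mulRho hρ ω) ∧
    (∀ A : Matrix (Fin n) (Fin n) ℂ, divRho ρ ω (mulRho hρ ω A) = A) ∧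
    (∀ A : Matrix (Fin n) (Fin n) ℂ, mulRho hρ ω (divRho ρ ω A) = A) := by
  set U := (hρ.1.eigenvectorUnitary : Matrix (Fin n) (Fin n) ℂ) with hU
  set lam := hρ.1.eigenvalues with hlamdef
  have hlam : ∀ i, 0 < lam i := hρ.eigenvalues_pos
  have hU1 : U * star U = 1 := Matrix.mem_unitaryGroup_iff.mp (hρ.1.eigenvectorUnitary).2
  have hU2 : star U * U = 1 := Matrix.mem_unitaryGroup_iff'.mp (hρ.1.eigenvectorUnitary).2
  have hsck : ∀ k l : Fin n,
      (∫ t in Set.Ioi (0:ℝ), ((t + Real.exp (-ω/2) * lam k) * (t + Real.exp (ω/2) * lam l))⁻¹) *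
      (∫ s in (0:ℝ)..1,
        (Real.exp (-ω/2) * lam k) ^ s * (Real.exp (ω/2) * lam l) ^ (1-s)) = 1 :=
    fun k l => (scalar_key (mul_pos (Real.exp_pos _) (hlam k))
      (mul_pos (Real.exp_pos _) (hlam l))).2
  have key1 : ∀ A : Matrix (Fin n) (Fin n) ℂ, divRho ρ ω (mulRho hρ ω A) = A := by
    intro A
    rw [mulRho_repr hρ ω A]
    simp_rw [smul_smul]
    rw [sum_form U (fun k l =>
      ((∫ s in (0:ℝ)..1, (Real.exp (-ω/2) * lam k) ^ s * (Real.exp (ω/2) * lam l) ^ (1-s) : ℝ) : ℂ)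
        * ((star U * A * U) k l))]
    rw [divRho_repr hρ ω _]
    simp_rw [← hU, ← hlamdef, star_conj U hU2, Matrix.of_apply, smul_smul]
    have hone : ∀ k l : Fin n,
        ((∫ t in Set.Ioi (0:ℝ),
            ((t + Real.exp (-ω/2) * lam k) * (t + Real.exp (ω/2) * lam l))⁻¹ : ℝ) : ℂ) *
        (((∫ s in (0:ℝ)..1,
            (Real.exp (-ω/2) * lam k) ^ s * (Real.exp (ω/2) * lam l) ^ (1-s) : ℝ) : ℂ) *
          ((star U * A * U) k l)) = (star U * A * U) k l := by
      intro k l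
      rw [← mul_assoc, ← Complex.ofReal_mul, hsck k l, Complex.ofReal_one, one_mul]
    simp_rw [hone]
    rw [sum_form U (fun k l => (star U * A * U) k l)]
    rw [show Matrix.of (fun k l => (star U * A * U) k l) = star U * A * U from rfl]
    rw [show U * (star U * A * U) * star U = (U * star U) * A * (U * star U) from by
      simp only [Matrix.mul_assoc], hU1, Matrix.one_mul, Matrix.mul_one]
  have key2 : ∀ A : Matrix (Fin n) (Fin n) ℂ, mulRho hρ ω (divRho ρ ω A) = A := by
    intro A
    rw [divRho_repr hρ ω A]
    simp_rw [smul_smul]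
    rw [sum_form U (fun k l =>
      ((∫ t in Set.Ioi (0:ℝ),
          ((t + Real.exp (-ω/2) * lam k) * (t + Real.exp (ω/2) * lam l))⁻¹ : ℝ) : ℂ)
        * ((star U * A * U) k l))]
    rw [mulRho_repr hρ ω _]
    simp_rw [← hU, ← hlamdef, star_conj U hU2, Matrix.of_apply, smul_smul]
    have hone : ∀ k l : Fin n,
        ((∫ s in (0:ℝ)..1,
            (Real.exp (-ω/2) * lam k) ^ s * (Real.exp (ω/2) * lam l) ^ (1-s) : ℝ) : ℂ) *
        (((∫ t in Set.Ioi (0:ℝ),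
            ((t + Real.exp (-ω/2) * lam k) * (t + Real.exp (ω/2) * lam l))⁻¹ : ℝ) : ℂ) *
          ((star U * A * U) k l)) = (star U * A * U) k l := by
      intro k l
      rw [← mul_assoc, ← Complex.ofReal_mul, mul_comm
        (∫ s in (0:ℝ)..1, (Real.exp (-ω/2) * lam k) ^ s * (Real.exp (ω/2) * lam l) ^ (1-s)),
        hsck k l, Complex.ofReal_one, one_mul]
    simp_rw [hone]
    rw [sum_form U (fun k l => (star U * A * U) k l)]
    rw [show Matrix.of (fun k l => (star U * A * U) k l) = star U * A * U from rfl]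
    rw [show U * (star U * A * U) * star U = (U * star U) * A * (U * star U) from by
      simp only [Matrix.mul_assoc], hU1, Matrix.one_mul, Matrix.mul_one]
  exact ⟨Function.bijective_iff_has_inverse.mpr ⟨divRho ρ ω, key1, key2⟩, key1, key2⟩
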